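/- The function w(x) := 1 + 2 ∫₀ˣ e^{1 − e^{−y}} dy satisfies w(x) − 1 = ∫₀ˣ (e^{−y} + e^{−(x−y)}) w(y) dy for all x ≥ 0; equivalently, w solves the ODE w''(x) = e^{−x} w'(x) with w(0) = 1 and w'(0) = 2 together with the above Volterra equation. -/

import Mathlib

open MeasureTheory Real

/-- The function `w(x) = 1 + 2 ∫₀ˣ e^{1 − e^{−y}} dy`. -/
noncomputable def w (x : ℝ) : ℝ := 1 + 2 * ∫ y in (0:ℝ)..x, Real.exp (1 - Real.exp (-y))

lemma hg_deriv (y : ℝ) :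
    HasDerivAt (fun t => Real.exp (1 - Real.exp (-t)))
      (Real.exp (-y) * Real.exp (1 - Real.exp (-y))) y := by
  have hneg : HasDerivAt (fun t : ℝ => Real.exp (-t)) (-Real.exp (-y)) y := by
    simpa [Function.comp_def] using (Real.hasDerivAt_exp (-y)).comp y (hasDerivAt_neg y)
  have hinner : HasDerivAt (fun t : ℝ => 1 - Real.exp (-t)) (Real.exp (-y)) y := by
    simpa using hneg.const_sub 1
  simpa [mul_comm, Function.comp_def] using (Real.hasDerivAt_exp (1 - Real.exp (-y))).comp y hinner

lemma hw_deriv (x : ℝ) : HasDerivAt w (2 * Real.exp (1 - Real.exp (-x))) x := by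
  have hcont : Continuous fun y : ℝ => Real.exp (1 - Real.exp (-y)) := by
    continuity
  have h : HasDerivAt (fun u => ∫ y in (0:ℝ)..u, Real.exp (1 - Real.exp (-y)))
      (Real.exp (1 - Real.exp (-x))) x :=
    intervalIntegral.integral_hasDerivAt_right
      (hcont.intervalIntegrable 0 x)
      (hcont.stronglyMeasurableAtFilter _ _)
      hcont.continuousAt
  exact (h.const_mul 2).const_add 1

lemma w_cont : Continuous w :=
  Differentiable.continuous fun x => (hw_deriv x).differentiableAt

lemma w_zero : w 0 = 1 := by simp [w]

theorem stmt_4 :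
    (∀ x : ℝ, 0 ≤ x →
      w x - 1 = ∫ y in (0:ℝ)..x, (Real.exp (-y) + Real.exp (-(x - y))) * w y) ∧
    w 0 = 1 ∧ deriv w 0 = 2 ∧
    (∀ x : ℝ, 0 ≤ x → deriv (deriv w) x = Real.exp (-x) * deriv w x) := by
  refine ⟨?_, w_zero, ?_, ?_⟩
  · intro x _
    set H : ℝ → ℝ := fun y =>
      -Real.exp (-y) * w y + 2 * Real.exp (1 - Real.exp (-y)) +
        Real.exp (-x) * (Real.exp y * w y + w y
          - 2 * (Real.exp y * Real.exp (1 - Real.exp (-y)))) with hH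
    have hderiv : ∀ y ∈ Set.uIcc (0:ℝ) x,
        HasDerivAt H ((Real.exp (-y) + Real.exp (-(x - y))) * w y) y := by
      intro y _
      have hneg : HasDerivAt (fun t : ℝ => Real.exp (-t)) (-Real.exp (-y)) y := by
        simpa [Function.comp_def] using (Real.hasDerivAt_exp (-y)).comp y (hasDerivAt_neg y)
      have hgy := hg_deriv y
      have hwy := hw_deriv y
      have hey : HasDerivAt Real.exp (Real.exp y) y := Real.hasDerivAt_exp y
      have hbig :
          HasDerivAt H
            ((-(-Real.exp (-y)) * w y + (-Real.exp (-y)) * (2 * Real.exp (1 - Real.exp (-y))))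
              + 2 * (Real.exp (-y) * Real.exp (1 - Real.exp (-y)))
              + Real.exp (-x) *
                ((Real.exp y * w y + Real.exp y * (2 * Real.exp (1 - Real.exp (-y))))
                  + 2 * Real.exp (1 - Real.exp (-y))
                  - 2 * (Real.exp y * Real.exp (1 - Real.exp (-y))
                      + Real.exp y * (Real.exp (-y) * Real.exp (1 - Real.exp (-y)))))) y := by
        exact (((hneg.neg.mul hwy).add (hgy.const_mul 2)).add
          ((((hey.mul hwy).add hwy).sub ((hey.mul hgy).const_mul 2)).const_mul
            (Real.exp (-x))))
      convert hbig using 1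
      have h1 : Real.exp (-y) * Real.exp y = 1 := by
        rw [← Real.exp_add]; simp
      have h2 : Real.exp (-(x - y)) = Real.exp (-x) * Real.exp y := by
        rw [← Real.exp_add]; ring_nf
      rw [h2]
      linear_combination (2 * Real.exp (-x) * Real.exp (1 - Real.exp (-y))) * h1
    have hint : IntervalIntegrable
        (fun y => (Real.exp (-y) + Real.exp (-(x - y))) * w y) volume 0 x := by
      apply Continuous.intervalIntegrable
      exact ((Real.continuous_exp.comp continuous_neg).add
        (Real.continuous_exp.comp ((continuous_const.sub continuous_id).neg))).mul w_cont
    have key := intervalIntegral.integral_eq_sub_of_hasDerivAt hderiv hint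
    rw [key, hH]
    simp only [w_zero]
    have h1 : Real.exp (-x) * Real.exp x = 1 := by
      rw [← Real.exp_add]; simp
    simp [Real.exp_zero]
    linear_combination (2 * Real.exp (1 - Real.exp (-x)) - w x) * h1
  · rw [(hw_deriv 0).deriv]; simp
  · intro x _
    have hD : deriv w = fun x => 2 * Real.exp (1 - Real.exp (-x)) := by
      funext t; exact (hw_deriv t).deriv
    rw [hD]
    have : HasDerivAt (fun x => 2 * Real.exp (1 - Real.exp (-x)))
        (2 * (Real.exp (-x) * Real.exp (1 - Real.exp (-x)))) x :=
      (hg_deriv x).const_mul 2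
    rw [this.deriv]
    ring
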